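/- arXiv:2111.08255 — 2 statements merged into one kernel-verified Lean document; each statement's English description precedes it below -/
import Mathlib

section
/- Let L: ℝᴺ → ℝ be a quadratic functional and K a linear map on ℝᴺ such that L(Kf) ≤ L(f) for all f, with strict inequality L(Kf) < L(f) whenever L(f) > 0, and Kf = f whenever L(f) = 0. If additionally L(f) ≥ 0 for all f and L is continuous, and the sublevel sets {f : L(f) ≤ L(f₀)} are compact, then for every f₀ the sequence L(Kᵐ f₀) converges to 0 as m → ∞. -/
open Filter

theorem iterative_descent_tendsto_zero (N : ℕ)
    (L : QuadraticForm ℝ (Fin N → ℝ))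
    (K : (Fin N → ℝ) →ₗ[ℝ] (Fin N → ℝ))
    (hcont : Continuous fun f : Fin N → ℝ => L f)
    (hnonneg : ∀ f, 0 ≤ L f)
    (hdec : ∀ f, L (K f) ≤ L f)
    (hstrict : ∀ f, 0 < L f → L (K f) < L f)
    (hfix : ∀ f, L f = 0 → K f = f)
    (hcompact : ∀ f₀ : Fin N → ℝ, IsCompact {f : Fin N → ℝ | L f ≤ L f₀}) :
    ∀ f₀ : Fin N → ℝ,
      Tendsto (fun m : ℕ => L ((⇑K)^[m] f₀)) atTop (nhds 0) := by
  intro f₀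
  set x : ℕ → (Fin N → ℝ) := fun m => (⇑K)^[m] f₀ with hx
  set a : ℕ → ℝ := fun m => L (x m) with ha
  have hsucc : ∀ m, x (m + 1) = K (x m) := by
    intro m; simp [hx, Function.iterate_succ_apply']
  have hanti : Antitone a := by
    apply antitone_nat_of_succ_le
    intro m
    rw [ha]
    simp only
    rw [hsucc]
    exact hdec (x m)
  have hbdd : BddBelow (Set.range a) := ⟨0, by rintro _ ⟨m, rfl⟩; exact hnonneg _⟩
  set c : ℝ := ⨅ m, a m with hc
  have hconv : Tendsto a atTop (nhds c) := tendsto_atTop_ciInf hanti hbdd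
  have hc0 : 0 ≤ c := le_ciInf fun m => hnonneg _
  have hcle : ∀ m, c ≤ a m := fun m => ciInf_le hbdd m
  -- show c = 0
  rcases (eq_or_lt_of_le hc0).imp Eq.symm id with hceq | hcpos
  · exact hceq ▸ hconv
  exfalso
  -- sequence lies in compact sublevel set
  have hmem : ∀ m, x m ∈ {f : Fin N → ℝ | L f ≤ L f₀} := by
    intro m
    have : a m ≤ a 0 := hanti (Nat.zero_le m)
    simpa [ha, hx] using this
  obtain ⟨g, hg, φ, hφ, hlim⟩ := (hcompact f₀).tendsto_subseq hmem
  have hLg : L g = c := by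
    have h1 : Tendsto (fun k => L (x (φ k))) atTop (nhds (L g)) :=
      (hcont.tendsto g).comp hlim
    have h2 : Tendsto (fun k => a (φ k)) atTop (nhds c) :=
      hconv.comp (hφ.tendsto_atTop)
    exact tendsto_nhds_unique h1 h2
  have hKg : Tendsto (fun k => L (K (x (φ k)))) atTop (nhds (L (K g))) :=
    ((hcont.comp K.continuous_of_finiteDimensional).tendsto g).comp hlim
  have h3 : Tendsto (fun k => a (φ k + 1)) atTop (nhds c) :=
    hconv.comp ((tendsto_add_atTop_nat 1).comp hφ.tendsto_atTop)
  have h4 : (fun k => a (φ k + 1)) = fun k => L (K (x (φ k))) := by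
    funext k; simp [ha, hsucc]
  rw [h4] at h3
  have : L (K g) = c := tendsto_nhds_unique hKg h3
  have := hstrict g (hLg ▸ hcpos)
  rw [hLg] at this
  linarith
end

section
/- Let M₁ and M₂ be symmetric real N×N matrices with eigenvalues in [0,1] (shrinking smoothers), and suppose the backfitting update for two components with data y = 0 is given by the linear map Φ: (f₁, f₂) ↦ (−M₁f₂, −M₂(−M₁f₂)). Then the homogeneous loss L₀(f₁, f₂) = ‖f₁ + f₂‖² + f₁ᵀ(M₁⁻ − I)f₁ + f₂ᵀ(M₂⁻ − I)f₂ is non-increasing under each component update, where M_i⁻ denotes a symmetric matrix with M_i M_i⁻ M_i = M_i and f_i assumed to lie in the range of M_i. -/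
open Matrix

/-- Euclidean norm of a finite real vector. -/
noncomputable def enorm {ι : Type*} [Fintype ι] (v : ι → ℝ) : ℝ :=
  Real.sqrt (∑ i, v i ^ 2)

lemma enorm_sq {ι : Type*} [Fintype ι] (v : ι → ℝ) : _root_.enorm v ^ 2 = v ⬝ᵥ v := by
  rw [_root_.enorm, Real.sq_sqrt (Finset.sum_nonneg fun i _ => sq_nonneg _)]
  simp [dotProduct, pow_two]

lemma psd_of_eig {N : ℕ} (M : Matrix (Fin N) (Fin N) ℝ) (hsym : Mᵀ = M)
    (heig : ∀ (μ : ℝ) (v : Fin N → ℝ), v ≠ 0 → M.mulVec v = μ • v → 0 ≤ μ) :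
    M.PosSemidef := by
  have hherm : M.IsHermitian := by rwa [IsHermitian, conjTranspose_eq_transpose_of_trivial]
  refine hherm.posSemidef_iff_eigenvalues_nonneg.mpr fun i => ?_
  exact heig _ _ (fun h => hherm.eigenvectorBasis.orthonormal.ne_zero i (by simpa using congrArg (WithLp.toLp 2) h))
    (hherm.mulVec_eigenvectorBasis i)

lemma sym_dot {N : ℕ} (M : Matrix (Fin N) (Fin N) ℝ) (hsym : Mᵀ = M)
    (x y : Fin N → ℝ) : x ⬝ᵥ M.mulVec y = (M.mulVec x) ⬝ᵥ y := by
  rw [dotProduct_mulVec, ← mulVec_transpose, hsym]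

lemma mulVec_dot {N : ℕ} (A : Matrix (Fin N) (Fin N) ℝ) (x y : Fin N → ℝ) :
    (A.mulVec x) ⬝ᵥ y = x ⬝ᵥ (Aᵀ.mulVec y) := by
  rw [dotProduct_mulVec, vecMul_transpose]

lemma key {N : ℕ} (M Mg : Matrix (Fin N) (Fin N) ℝ) (hsym : Mᵀ = M)
    (hgen : M * Mg * M = M) (hpsd : M.PosSemidef) (u f : Fin N → ℝ) :
    _root_.enorm (-(M.mulVec f) + f) ^ 2 + (-(M.mulVec f)) ⬝ᵥ ((Mg - 1).mulVec (-(M.mulVec f)))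
      ≤ _root_.enorm (M.mulVec u + f) ^ 2 + (M.mulVec u) ⬝ᵥ ((Mg - 1).mulVec (M.mulVec u)) := by
  have hMgM : ∀ w : Fin N → ℝ, (M.mulVec w) ⬝ᵥ (Mg.mulVec (M.mulVec w)) = w ⬝ᵥ M.mulVec w := by
    intro w
    rw [mulVec_dot, hsym, mulVec_mulVec, mulVec_mulVec, hgen]
  have hpos : 0 ≤ (u + f) ⬝ᵥ M.mulVec (u + f) := by
    have := hpsd.dotProduct_mulVec_nonneg (u + f)
    simpa using this
  have expand : (u + f) ⬝ᵥ M.mulVec (u + f)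
      = u ⬝ᵥ M.mulVec u + 2 * (f ⬝ᵥ M.mulVec u) + f ⬝ᵥ M.mulVec f := by
    have huf : u ⬝ᵥ M.mulVec f = f ⬝ᵥ M.mulVec u := by
      rw [sym_dot M hsym, dotProduct_comm]
    rw [mulVec_add, dotProduct_add, add_dotProduct, add_dotProduct, huf]
    ring
  rw [enorm_sq, enorm_sq]
  have h1 : ∀ g : Fin N → ℝ, g ⬝ᵥ (Mg - 1).mulVec g = g ⬝ᵥ Mg.mulVec g - g ⬝ᵥ g := by
    intro g; rw [sub_mulVec, dotProduct_sub, one_mulVec]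
  rw [h1, h1, hMgM u]
  have hMf : (-(M.mulVec f)) ⬝ᵥ Mg.mulVec (-(M.mulVec f)) = f ⬝ᵥ M.mulVec f := by
    rw [neg_dotProduct, mulVec_neg, dotProduct_neg, neg_neg, hMgM f]
  rw [hMf]
  have hd : ∀ a b : Fin N → ℝ, (a + b) ⬝ᵥ (a + b) = a ⬝ᵥ a + 2 * (a ⬝ᵥ b) + b ⬝ᵥ b := by
    intro a b
    rw [dotProduct_add, add_dotProduct, add_dotProduct, dotProduct_comm b a]; ring
  rw [hd, hd]
  have hMuf : (M.mulVec u) ⬝ᵥ f = f ⬝ᵥ M.mulVec u := dotProduct_comm _ _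
  have hMff : (-(M.mulVec f)) ⬝ᵥ f = -(f ⬝ᵥ M.mulVec f) := by
    rw [neg_dotProduct, dotProduct_comm]
  rw [hMuf, hMff]
  have hnn : (-(M.mulVec f)) ⬝ᵥ (-(M.mulVec f)) = (M.mulVec f) ⬝ᵥ (M.mulVec f) := by
    rw [neg_dotProduct, dotProduct_neg, neg_neg]
  rw [hnn]
  nlinarith [hpos, expand]

theorem backfitting_loss_nonincreasing (N : ℕ)
    (M₁ M₂ M₁g M₂g : Matrix (Fin N) (Fin N) ℝ)
    (hM₁sym : M₁ᵀ = M₁) (hM₂sym : M₂ᵀ = M₂)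
    (hM₁eig : ∀ (μ : ℝ) (v : Fin N → ℝ), v ≠ 0 → M₁.mulVec v = μ • v →
      μ ∈ Set.Icc (0 : ℝ) 1)
    (hM₂eig : ∀ (μ : ℝ) (v : Fin N → ℝ), v ≠ 0 → M₂.mulVec v = μ • v →
      μ ∈ Set.Icc (0 : ℝ) 1)
    (hM₁gsym : M₁gᵀ = M₁g) (hM₂gsym : M₂gᵀ = M₂g)
    (hM₁gen : M₁ * M₁g * M₁ = M₁) (hM₂gen : M₂ * M₂g * M₂ = M₂)
    (L₀ : (Fin N → ℝ) → (Fin N → ℝ) → ℝ)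
    (hL₀ : ∀ g₁ g₂, L₀ g₁ g₂ = _root_.enorm (g₁ + g₂) ^ 2
      + g₁ ⬝ᵥ ((M₁g - 1).mulVec g₁) + g₂ ⬝ᵥ ((M₂g - 1).mulVec g₂))
    (f₁ f₂ : Fin N → ℝ)
    (hf₁ : ∃ g, f₁ = M₁.mulVec g) (hf₂ : ∃ g, f₂ = M₂.mulVec g) :
    L₀ (-(M₁.mulVec f₂)) f₂ ≤ L₀ f₁ f₂ ∧
      L₀ (-(M₁.mulVec f₂)) (-(M₂.mulVec (-(M₁.mulVec f₂))))
        ≤ L₀ (-(M₁.mulVec f₂)) f₂ := by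
  obtain ⟨u, hu⟩ := hf₁
  obtain ⟨v, hv⟩ := hf₂
  have hpsd₁ := psd_of_eig M₁ hM₁sym (fun μ w hw hmw => (hM₁eig μ w hw hmw).1)
  have hpsd₂ := psd_of_eig M₂ hM₂sym (fun μ w hw hmw => (hM₂eig μ w hw hmw).1)
  constructor
  · rw [hL₀, hL₀, hu]
    have := key M₁ M₁g hM₁sym hM₁gen hpsd₁ u f₂
    linarith
  · rw [hL₀, hL₀]
    have hk := key M₂ M₂g hM₂sym hM₂gen hpsd₂ v (-(M₁.mulVec f₂))
    rw [← hv] at hk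
    rw [add_comm (-(M₁.mulVec f₂)) f₂,
      add_comm (-(M₁.mulVec f₂)) (-(M₂.mulVec (-(M₁.mulVec f₂))))]
    linarith
end
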